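/- The condition 'there exists d > 0 such that every element of the affine hull A of M at distance at most d from μ belongs to M' is equivalent to: for all f in the direction space of A, ⟨μ, f⟩ + d‖f‖ ≤ sup_{g∈M} ⟨f, g⟩. -/

import Mathlib

open scoped RealInnerProductSpace

/-- For `d > 0`, the condition "every element of the (closed) affine hull `A` of `M` at
distance at most `d` from `μ` belongs to `M`" is equivalent to:
`∀ f` in the direction space of `A`, `⟪μ, f⟫ + d‖f‖ ≤ sup_{g∈M} ⟪f, g⟫`. -/
theorem ball_in_polytope_iff_dual_condition
    {F : Type*} [NormedAddCommGroup F] [InnerProductSpace ℝ F]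
    (M : Set F) (hMne : M.Nonempty) (hMconv : Convex ℝ M) (hMcpt : IsCompact M)
    (μ : F) (hμ : μ ∈ M)
    (d : ℝ) (hd : 0 < d) :
    (∀ g ∈ (affineSpan ℝ M : Set F), ‖g - μ‖ ≤ d → g ∈ M) ↔
      (∀ f ∈ (affineSpan ℝ M).direction,
        ⟪μ, f⟫ + d * ‖f‖ ≤ sSup ((fun g : F => ⟪f, g⟫) '' M)) := by
  have hμspan : μ ∈ affineSpan ℝ M := subset_affineSpan ℝ M hμ
  constructor
  · intro h f hf
    set g : F := μ + (d / ‖f‖) • f with hg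
    have hgspan : g ∈ affineSpan ℝ M := by
      have := AffineSubspace.vadd_mem_of_mem_direction
        (Submodule.smul_mem _ (d / ‖f‖) hf) hμspan
      simpa [vadd_eq_add, add_comm] using this
    have hnorm : ‖g - μ‖ ≤ d := by
      rcases eq_or_ne f 0 with rfl | hf0
      · simp [hg, hd.le]
      · have : ‖g - μ‖ = d := by
          simp [hg, norm_smul, abs_of_nonneg (div_nonneg hd.le (norm_nonneg f)),
            div_mul_cancel₀ _ (norm_ne_zero_iff.mpr hf0), hd.le]
        linarith
    have hgM : g ∈ M := h g hgspan hnorm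
    have hval : ⟪f, g⟫ = ⟪μ, f⟫ + d * ‖f‖ := by
      rcases eq_or_ne f 0 with rfl | hf0
      · simp
      · rw [hg, inner_add_right, real_inner_smul_right, real_inner_self_eq_norm_sq,
          real_inner_comm]
        have hfn : ‖f‖ ≠ 0 := norm_ne_zero_iff.mpr hf0
        field_simp
    have hbdd : BddAbove ((fun g : F => ⟪f, g⟫) '' M) :=
      (hMcpt.image (continuous_const.inner continuous_id)).bddAbove
    calc ⟪μ, f⟫ + d * ‖f‖ = ⟪f, g⟫ := hval.symm
      _ ≤ _ := le_csSup hbdd ⟨g, hgM, rfl⟩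
  · intro h g hgspan hgnorm
    by_contra hgM
    obtain ⟨p, hpM, hpmin⟩ := hMcpt.exists_isMinOn hMne
      (Continuous.continuousOn (by continuity : Continuous fun w : F => ‖g - w‖))
    haveI : Nonempty M := hMne.to_subtype
    have hproj : ‖g - p‖ = ⨅ w : M, ‖g - w‖ := by
      refine le_antisymm (le_ciInf fun w => hpmin w.2) ?_
      exact ciInf_le (⟨0, by rintro _ ⟨w, rfl⟩; positivity⟩ : BddBelow (Set.range fun w : M => ‖g - ↑w‖)) ⟨p, hpM⟩
    have hvar : ∀ w ∈ M, ⟪g - p, w - p⟫ ≤ 0 :=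
      (norm_eq_iInf_iff_real_inner_le_zero hMconv hpM).mp hproj
    set f : F := g - p with hfdef
    have hfdir : f ∈ (affineSpan ℝ M).direction :=
      AffineSubspace.vsub_mem_direction hgspan (subset_affineSpan ℝ M hpM)
    have hf0 : f ≠ 0 := by
      intro h0
      exact hgM (by rw [sub_eq_zero.mp h0]; exact hpM)
    -- sup bound
    have hsup : sSup ((fun w : F => ⟪f, w⟫) '' M) ≤ ⟪f, p⟫ := by
      apply csSup_le (hMne.image _)
      rintro _ ⟨w, hwM, rfl⟩
      have := hvar w hwM
      rw [inner_sub_right] at this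
      linarith
    have h1 : ⟪μ, f⟫ + d * ‖f‖ ≤ ⟪f, p⟫ := (h f hfdir).trans hsup
    have h2 : ⟪f, g - μ⟫ ≤ d * ‖f‖ := by
      calc ⟪f, g - μ⟫ ≤ ‖f‖ * ‖g - μ‖ := real_inner_le_norm f (g - μ)
        _ ≤ ‖f‖ * d := by
            exact mul_le_mul_of_nonneg_left hgnorm (norm_nonneg f)
        _ = d * ‖f‖ := mul_comm _ _
    have h3 : ⟪f, g⟫ = ⟪f, p⟫ + ‖f‖ ^ 2 := by
      have : g = p + f := by rw [hfdef]; abel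
      rw [this, inner_add_right, real_inner_self_eq_norm_sq]
    have hfn : 0 < ‖f‖ := norm_pos_iff.mpr hf0
    have h4 : (0:ℝ) < ‖f‖ ^ 2 := by positivity
    have h5 : ⟪f, g⟫ = ⟪f, μ⟫ + ⟪f, g - μ⟫ := by rw [inner_sub_right]; ring
    rw [real_inner_comm f μ] at h1
    linarith
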